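/- Let (R,Q,α) be a prelog ring and I_α ⊆ R the ideal generated by α(Q⁺), where Q⁺ is the set of non-invertible elements of Q. Then the natural map induces an isomorphism FΩ_{(R,Q,α)} ⊗_R R/I_α ≅ FΩ_{(R/I_α, Q, πα)}, where π: R → R/I_α is the quotient map. -/

import Mathlib

open scoped TensorProduct

/-- The polynomial `P(X,Y) = ((X+Y)^p - X^p - Y^p)/p` evaluated at `a, b`. -/
def fwP {R : Type*} [CommRing R] (p : ℕ) (a b : R) : R :=
  ∑ i ∈ Finset.Ioo 0 p, (Nat.choose p i / p : ℕ) • (a ^ i * b ^ (p - i))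

/-- A Frobenius–Witt derivation. -/
structure IsFWDerivation {R M : Type*} [CommRing R] [AddCommGroup M] [Module R M]
    (p : ℕ) (D : R → M) : Prop where
  map_add' : ∀ a b : R, D (a + b) = D a + D b - fwP p a b • D (p : R)
  map_mul' : ∀ a b : R, D (a * b) = b ^ p • D a + a ^ p • D b

/-- A logarithmic Frobenius–Witt derivation of the prelog ring `(R, Q, α)`. -/
structure IsLogFWDerivation {R M Q : Type*} [CommRing R] [AddCommGroup M] [Module R M]
    [CommMonoid Q] (p : ℕ) (α : Q →* R) (D : R → M) (δ : Q → M) : Prop where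
  toFW : IsFWDerivation p D
  map_one' : δ 1 = 0
  map_mul' : ∀ x y : Q, δ (x * y) = δ x + δ y
  compat : ∀ x : Q, D (α x) = α x ^ p • δ x

/-- The congruence on `Q` identifying elements differing by a unit;
its quotient is the sharpification `Q̄ = Q/Q^×`. -/
def sharpCon (Q : Type*) [CommMonoid Q] : Con Q where
  r x y := ∃ u : Qˣ, x = y * u
  iseqv := by
    refine ⟨fun x => ⟨1, by simp⟩, ?_, ?_⟩
    · rintro x y ⟨u, rfl⟩; exact ⟨u⁻¹, by simp⟩
    · rintro x y z ⟨u, rfl⟩ ⟨v, rfl⟩; exact ⟨v * u, by rw [Units.val_mul, mul_assoc]⟩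
  mul' := by
    rintro a b c d ⟨u, rfl⟩ ⟨v, rfl⟩
    exact ⟨u * v, by rw [Units.val_mul]; exact mul_mul_mul_comm b u d v⟩

/-- An ideal of a commutative monoid. -/
def IsMonIdeal {Q : Type*} [CommMonoid Q] (I : Set Q) : Prop :=
  ∀ a x : Q, x ∈ I → a * x ∈ I

/-- A prime ideal of a commutative monoid: an ideal whose complement is a submonoid. -/
def IsPrimeMonIdeal {Q : Type*} [CommMonoid Q] (I : Set Q) : Prop :=
  IsMonIdeal I ∧ (1 : Q) ∉ I ∧ ∀ x y : Q, x * y ∈ I → x ∈ I ∨ y ∈ I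

/-- The dimension of a commutative monoid: the Krull dimension of its poset of prime ideals. -/
noncomputable def monDim (Q : Type*) [CommMonoid Q] : WithBot (WithTop ℕ) :=
  Order.krullDim {I : Set Q // IsPrimeMonIdeal I}

/-- A commutative monoid is integral (cancellative). -/
def IsIntegralMon (Q : Type*) [CommMonoid Q] : Prop :=
  ∀ a b c : Q, a * b = a * c → b = c

/-- A commutative monoid is saturated: it is integral and whenever `x ∈ Q^{gp}` satisfies
`x^n ∈ Q` for some `n > 0`, then `x ∈ Q`; intrinsically, `a^n ∣ b^n → a ∣ b`. -/
def IsSaturatedMon (Q : Type*) [CommMonoid Q] : Prop :=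
  IsIntegralMon Q ∧ ∀ (a b : Q) (n : ℕ), 0 < n → a ^ n ∣ b ^ n → a ∣ b

/-- A commutative monoid is sharp if its only unit is `1`. -/
def IsSharpMon (Q : Type*) [CommMonoid Q] : Prop :=
  ∀ x : Q, IsUnit x → x = 1

/-- The ideal `I_α` of a prelog ring `(R, Q, α)`, generated by `α(Q⁺)`. -/
def prelogIdeal {R Q : Type*} [CommRing R] [CommMonoid Q] (α : Q →* R) : Ideal R :=
  Ideal.span (α '' {x : Q | ¬ IsUnit x})

/-- A Noetherian local ring is regular: its maximal ideal (= the ideal of nonunits) is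
generated by `dim R` elements. -/
def IsRegularLocal (S : Type*) [CommRing S] : Prop :=
  IsNoetherianRing S ∧ IsLocalRing S ∧
    ∃ (n : ℕ) (s : Fin n → S),
      Ideal.span (Set.range s) = Ideal.span {x : S | ¬ IsUnit x} ∧
      ringKrullDim S = (n : WithBot (WithTop ℕ))

/-- Log regularity of a local prelog ring `(R, Q, α)`. -/
def IsLogRegular {R Q : Type*} [CommRing R] [CommMonoid Q] (α : Q →* R) : Prop :=
  IsRegularLocal (R ⧸ prelogIdeal α) ∧
    ringKrullDim R = ringKrullDim (R ⧸ prelogIdeal α) + (by exact monDim Q : WithBot ℕ∞)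

lemma fwP_map {R S : Type*} [CommRing R] [CommRing S] (f : R →+* S) (p : ℕ) (a b : R) :
    fwP p (f a) (f b) = f (fwP p a b) := by
  simp [fwP, map_sum, map_nsmul, map_mul, map_pow]

lemma fwP_mem_left {R : Type*} [CommRing R] {I : Ideal R} (p : ℕ) {a : R} (b : R)
    (ha : a ∈ I) : fwP p a b ∈ I := by
  refine Submodule.sum_mem _ fun i hi => ?_
  obtain ⟨hi0, _⟩ := Finset.mem_Ioo.mp hi
  rw [nsmul_eq_mul, ← mul_assoc]
  exact I.mul_mem_right _ (I.mul_mem_left _ (I.pow_mem_of_mem ha _ hi0))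

lemma fwP_mem_right {R : Type*} [CommRing R] {I : Ideal R} (p : ℕ) (a : R) {b : R}
    (hb : b ∈ I) : fwP p a b ∈ I := by
  refine Submodule.sum_mem _ fun i hi => ?_
  obtain ⟨_, hip⟩ := Finset.mem_Ioo.mp hi
  rw [nsmul_eq_mul]
  exact I.mul_mem_left _ (I.mul_mem_left _ (I.pow_mem_of_mem hb _ (Nat.sub_pos_of_lt hip)))

/-- with `I_α` the ideal generated by `α(Q⁺)`, log FW-derivations of
`(R/I_α, Q, πα)` in an `R/I_α`-module correspond exactly to log FW-derivations of
`(R, Q, α)` (the condition `D(I_α)=0` is automatic); this expresses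
`FΩ_{(R,Q,α)} ⊗_R R/I_α ≅ FΩ_{(R/I_α,Q,πα)}`. -/
theorem stmt11 (p : ℕ) (hp : p.Prime) {R Q : Type*} [CommRing R] [CommMonoid Q]
    (α : Q →* R)
    {M : Type*} [AddCommGroup M] [Module (R ⧸ prelogIdeal α) M] [Module R M]
    [IsScalarTower R (R ⧸ prelogIdeal α) M]
    (D : R → M) (δ : Q → M) :
    IsLogFWDerivation p α D δ ↔
      ∃! D' : R ⧸ prelogIdeal α → M,
        IsLogFWDerivation p ((Ideal.Quotient.mk (prelogIdeal α)).toMonoidHom.comp α) D' δ ∧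
        ∀ a : R, D' (Ideal.Quotient.mk (prelogIdeal α) a) = D a := by
  have hsm : ∀ (r : R) (m : M), Ideal.Quotient.mk (prelogIdeal α) r • m = r • m := by
    intro r m
    rw [← Ideal.Quotient.algebraMap_eq]
    exact algebraMap_smul (R ⧸ prelogIdeal α) r m
  have hsm0 : ∀ (r : R) (m : M), r ∈ prelogIdeal α → r • m = 0 := by
    intro r m hr
    rw [← hsm, Ideal.Quotient.eq_zero_iff_mem.mpr hr, zero_smul]
  have hout : ∀ y : R ⧸ prelogIdeal α,
      Ideal.Quotient.mk (prelogIdeal α) (Quotient.out y) = y := fun y => Quotient.out_eq y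
  constructor
  · intro h
    -- D vanishes on the ideal
    have hD0 : ∀ x ∈ prelogIdeal α, D x = 0 := by
      intro x hx
      induction hx using Submodule.span_induction with
      | mem g hg =>
        obtain ⟨q, hq, rfl⟩ := hg
        rw [h.compat q]
        exact hsm0 _ _ ((prelogIdeal α).pow_mem_of_mem
          (Ideal.subset_span ⟨q, hq, rfl⟩) _ hp.pos)
      | zero =>
        have := h.toFW.map_mul' 0 0
        simpa [zero_pow hp.ne_zero] using this
      | add x y hx hy ihx ihy =>
        rw [h.toFW.map_add', ihx, ihy, hsm0 _ _ (fwP_mem_left p y hx)]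
        simp
      | smul r g hg ihg =>
        rw [smul_eq_mul, h.toFW.map_mul', ihg,
          hsm0 _ _ ((prelogIdeal α).pow_mem_of_mem hg _ hp.pos)]
        simp
    have hwd : ∀ a b : R, a - b ∈ prelogIdeal α → D a = D b := by
      intro a b hab
      have h1 : D a = D (b + (a - b)) := by rw [add_sub_cancel]
      rw [h1, h.toFW.map_add', hD0 _ hab, hsm0 _ _ (fwP_mem_right p b hab)]
      simp
    have key : ∀ a : R, D (Quotient.out (Ideal.Quotient.mk (prelogIdeal α) a)) = D a := by
      intro a
      refine hwd _ _ ?_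
      rw [← Ideal.Quotient.mk_eq_mk_iff_sub_mem, hout]
    refine ⟨fun y => D (Quotient.out y), ⟨?_, key⟩, ?_⟩
    · constructor
      · constructor
        · intro a b
          obtain ⟨a, rfl⟩ := Ideal.Quotient.mk_surjective a
          obtain ⟨b, rfl⟩ := Ideal.Quotient.mk_surjective b
          show D (Quotient.out (Ideal.Quotient.mk (prelogIdeal α) a
              + Ideal.Quotient.mk (prelogIdeal α) b)) = _
          rw [← map_add,
            show ((p : ℕ) : R ⧸ prelogIdeal α)
              = Ideal.Quotient.mk (prelogIdeal α) ((p : ℕ) : R) from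
              (map_natCast (Ideal.Quotient.mk (prelogIdeal α)) p).symm,
            key, key, key, key, h.toFW.map_add', fwP_map, hsm]
        · intro a b
          obtain ⟨a, rfl⟩ := Ideal.Quotient.mk_surjective a
          obtain ⟨b, rfl⟩ := Ideal.Quotient.mk_surjective b
          show D (Quotient.out (Ideal.Quotient.mk (prelogIdeal α) a
              * Ideal.Quotient.mk (prelogIdeal α) b)) = _
          rw [← map_mul, key, key, key, h.toFW.map_mul', ← map_pow, ← map_pow, hsm, hsm]
      · exact h.map_one'
      · exact h.map_mul'
      · intro x
        show D (Quotient.out (Ideal.Quotient.mk (prelogIdeal α) (α x)))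
          = (Ideal.Quotient.mk (prelogIdeal α) (α x)) ^ p • δ x
        rw [key, h.compat, ← map_pow (Ideal.Quotient.mk (prelogIdeal α)) (α x) p, hsm]
    · rintro D'' ⟨-, hD''⟩
      funext y
      obtain ⟨a, rfl⟩ := Ideal.Quotient.mk_surjective y
      rw [hD'' a, key]
  · rintro ⟨D', ⟨hder, hcomp⟩, -⟩
    have hDa : ∀ a : R, D a = D' (Ideal.Quotient.mk (prelogIdeal α) a) :=
      fun a => (hcomp a).symm
    have hpc : ((p : ℕ) : R ⧸ prelogIdeal α)
        = Ideal.Quotient.mk (prelogIdeal α) ((p : ℕ) : R) :=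
      (map_natCast (Ideal.Quotient.mk (prelogIdeal α)) p).symm
    constructor
    · constructor
      · intro a b
        rw [hDa, hDa, hDa, hDa, map_add]
        rw [hder.toFW.map_add', hpc, fwP_map, hsm]
      · intro a b
        rw [hDa, hDa, hDa, map_mul, hder.toFW.map_mul', ← map_pow, ← map_pow, hsm, hsm]
    · exact hder.map_one'
    · exact hder.map_mul'
    · intro x
      rw [hDa]
      have h2 := hder.compat x
      rw [show (((Ideal.Quotient.mk (prelogIdeal α)).toMonoidHom.comp α) x)
          = Ideal.Quotient.mk (prelogIdeal α) (α x) from rfl] at h2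
      rw [h2, ← map_pow, hsm]
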